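/- Let W = ℝ^{d} and let Q be a probability measure on W with finite mean μ := E_{w∼Q}[w]. Fix γ ≥ 0, κ > 0, ρ ∈ [0,1], and η > 0. Assume: (i) Q({w : sup_{x∈X} max_{k∈{1,…,K}} |s_w(x,k) − s_μ(x,k)| ≤ γ/2}) ≥ 1 − ρ, and (ii) for every w ∈ W, x ∈ X, j ∈ {1,…,K}, Δ_w(x,j) ≤ γ implies g^w_{γ,κ}(x,j) ≥ η. Then WCR^{det}(μ;D') ≤ η^{−1} (1 + e^{γ}) · VWR_γ(Q;D') + ρ. -/

import Mathlib

open MeasureTheory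

/-- Option margin: `Δ_s(y) = s(y) - max_{k ≠ y} s(k)`. -/
noncomputable def optionMargin {K : ℕ} (s : Fin K → ℝ) (y : Fin K) : ℝ :=
  s y - ⨆ k : {k : Fin K // k ≠ y}, s k.1

/-- Softmax probability `p_s(i) = exp(s i) / Σ_k exp(s k)`. -/
noncomputable def softmaxProb {K : ℕ} (s : Fin K → ℝ) (i : Fin K) : ℝ :=
  Real.exp (s i) / ∑ k : Fin K, Real.exp (s k)

/-- Margin gate `g_{γ,κ}(Δ) = σ((γ - Δ)/κ)` with the logistic sigmoid. -/
noncomputable def gate (γ κ Δ : ℝ) : ℝ := 1 / (1 + Real.exp (-((γ - Δ) / κ)))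

/-- Posterior-averaged margin-aware error-flow matrix `M̄^Q_{D',γ}`. -/
noncomputable def Mbar {X W : Type*} [MeasurableSpace X] [MeasurableSpace W] {K : ℕ}
    (D : Fin K → Measure X) (s : W → X → Fin K → ℝ) (γ κ : ℝ) (Q : Measure W) :
    Matrix (Fin K) (Fin K) ℝ := fun i j =>
  if i = j then 0
  else ∫ w, ∫ x, gate γ κ (optionMargin (s w x) j) * softmaxProb (s w x) i ∂(D j) ∂Q

/-- Vulnerable worst-option risk `VWR_γ(Q;D') = ‖M̄^Q_{D',γ}‖₁` (max column absolute sum). -/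
noncomputable def VWR {X W : Type*} [MeasurableSpace X] [MeasurableSpace W] {K : ℕ}
    (D : Fin K → Measure X) (s : W → X → Fin K → ℝ) (γ κ : ℝ) (Q : Measure W) : ℝ :=
  ⨆ j : Fin K, ∑ i : Fin K, |Mbar D s γ κ Q i j|

/-- Deterministic worst-class risk `WCR^{det}(μ;D') = max_j D'_j({x : Δ_μ(x,j) ≤ 0})`. -/
noncomputable def WCRdet {X W : Type*} [MeasurableSpace X] {K : ℕ}
    (D : Fin K → Measure X) (s : W → X → Fin K → ℝ) (μ : W) : ℝ :=
  ⨆ j : Fin K, ((D j) {x | optionMargin (s μ x) j ≤ 0}).toReal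

open Finset
lemma gate_nonneg (γ κ Δ : ℝ) : 0 ≤ gate γ κ Δ := by
  unfold gate; positivity

lemma gate_le_one (γ κ Δ : ℝ) : gate γ κ Δ ≤ 1 := by
  unfold gate
  rw [div_le_one (by positivity)]
  nlinarith [Real.exp_pos (-((γ - Δ) / κ))]

lemma softmax_nonneg {K : ℕ} (s : Fin K → ℝ) (i : Fin K) : 0 ≤ softmaxProb s i := by
  unfold softmaxProb; positivity

lemma sum_exp_pos {K : ℕ} [NeZero K] (s : Fin K → ℝ) : 0 < ∑ k : Fin K, Real.exp (s k) :=
  Finset.sum_pos (fun k _ => Real.exp_pos _) Finset.univ_nonempty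

lemma softmax_le_one {K : ℕ} [NeZero K] (s : Fin K → ℝ) (i : Fin K) : softmaxProb s i ≤ 1 := by
  unfold softmaxProb
  rw [div_le_one (sum_exp_pos s)]
  exact Finset.single_le_sum (f := fun k => Real.exp (s k)) (fun k _ => (Real.exp_pos _).le)
    (Finset.mem_univ i)

lemma sum_softmax {K : ℕ} [NeZero K] (s : Fin K → ℝ) : ∑ i : Fin K, softmaxProb s i = 1 := by
  unfold softmaxProb
  rw [← Finset.sum_div, div_self (sum_exp_pos s).ne']

theorem meas_ciSup' {ι : Type*} [Fintype ι] [Nonempty ι] {α : Type*} [MeasurableSpace α]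
    (f : α → ι → ℝ) (hf : ∀ i, Measurable fun a => f a i) :
    Measurable fun a => ⨆ i, f a i := by
  have h := Finset.measurable_sup' (f := fun i a => f a i) Finset.univ_nonempty
      (fun i _ => hf i)
  have : (fun a => ⨆ i, f a i) = Finset.univ.sup' Finset.univ_nonempty (fun i a => f a i) := by
    funext a; rw [Finset.sup'_apply, Finset.sup'_univ_eq_ciSup]
  rw [this]; exact h

theorem meas_integrand {X W : Type*} [MeasurableSpace X] [MeasurableSpace W] {K : ℕ}
    (hK : 2 ≤ K) (s : W → X → Fin K → ℝ)
    (hs : ∀ k : Fin K, Measurable fun p : W × X => s p.1 p.2 k) (γ κ : ℝ) (i j : Fin K) :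
    Measurable fun p : W × X =>
      gate γ κ (optionMargin (s p.1 p.2) j) * softmaxProb (s p.1 p.2) i := by
  haveI : Nonempty {k : Fin K // k ≠ j} := by
    obtain ⟨k, hk⟩ := Fintype.exists_ne_of_one_lt_card (by simp; omega) j
    exact ⟨⟨k, hk⟩⟩
  have hΔ : Measurable fun p : W × X => optionMargin (s p.1 p.2) j := by
    unfold optionMargin
    exact (hs j).sub (meas_ciSup' (fun (p : W × X) (k : {k : Fin K // k ≠ j}) => s p.1 p.2 k.1)
      (fun k => hs k.1))
  have hg : Measurable fun p : W × X => gate γ κ (optionMargin (s p.1 p.2) j) := by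
    unfold gate
    exact measurable_const.div
      (measurable_const.add (((measurable_const.sub hΔ).div_const κ).neg.exp))
  have hp : Measurable fun p : W × X => softmaxProb (s p.1 p.2) i := by
    unfold softmaxProb
    exact ((hs i).exp).div (Finset.measurable_sum _ (fun k _ => (hs k).exp))
  exact hg.mul hp

theorem margin_close {K : ℕ} (hK : 2 ≤ K) (u v : Fin K → ℝ) (j : Fin K) (γ : ℝ)
    (hclose : ∀ k, |u k - v k| ≤ γ / 2) :
    optionMargin u j ≤ optionMargin v j + γ := by
  haveI hne : Nonempty {k : Fin K // k ≠ j} := by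
    obtain ⟨k, hk⟩ := Fintype.exists_ne_of_one_lt_card (by simp; omega) j
    exact ⟨⟨k, hk⟩⟩
  unfold optionMargin
  have e1 : (⨆ k : {k : Fin K // k ≠ j}, u k.1)
      = Finset.univ.sup' Finset.univ_nonempty (fun k : {k : Fin K // k ≠ j} => u k.1) :=
    (Finset.sup'_univ_eq_ciSup _).symm
  have e2 : (⨆ k : {k : Fin K // k ≠ j}, v k.1)
      = Finset.univ.sup' Finset.univ_nonempty (fun k : {k : Fin K // k ≠ j} => v k.1) :=
    (Finset.sup'_univ_eq_ciSup _).symm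
  rw [e1, e2]
  have h1 : u j ≤ v j + γ / 2 := by
    have := abs_le.mp (hclose j); linarith [this.1, this.2]
  have h2 : Finset.univ.sup' Finset.univ_nonempty (fun k : {k : Fin K // k ≠ j} => v k.1)
      ≤ Finset.univ.sup' Finset.univ_nonempty (fun k : {k : Fin K // k ≠ j} => u k.1)
        + γ / 2 := by
    apply Finset.sup'_le
    intro k _
    have := abs_le.mp (hclose k.1)
    have h3 : u k.1 ≤ Finset.univ.sup' Finset.univ_nonempty
        (fun k : {k : Fin K // k ≠ j} => u k.1) :=
      Finset.le_sup' (f := fun k : {k : Fin K // k ≠ j} => u k.1) (Finset.mem_univ k)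
    linarith [this.1, this.2]
  linarith

theorem softmax_tail {K : ℕ} (hK : 2 ≤ K) (u : Fin K → ℝ) (j : Fin K) (γ : ℝ)
    (hΔ : optionMargin u j ≤ γ) :
    1 / (1 + Real.exp γ) ≤ ∑ i ∈ Finset.univ.erase j, softmaxProb u i := by
  haveI : NeZero K := ⟨by omega⟩
  haveI hne : Nonempty {k : Fin K // k ≠ j} := by
    obtain ⟨k, hk⟩ := Fintype.exists_ne_of_one_lt_card (by simp; omega) j
    exact ⟨⟨k, hk⟩⟩
  obtain ⟨k, -, hk⟩ := Finset.exists_mem_eq_sup' (Finset.univ_nonempty)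
    (fun k : {k : Fin K // k ≠ j} => u k.1)
  have hsup : (⨆ k : {k : Fin K // k ≠ j}, u k.1) = u k.1 := by
    rw [← Finset.sup'_univ_eq_ciSup, hk]
  have hku : u j - γ ≤ u k.1 := by
    unfold optionMargin at hΔ; rw [hsup] at hΔ; linarith
  set T := ∑ i : Fin K, Real.exp (u i) with hT
  have hTpos : 0 < T := sum_exp_pos u
  set S := ∑ i ∈ Finset.univ.erase j, softmaxProb u i with hS
  have hpj : softmaxProb u j + S = 1 := by
    rw [hS, Finset.add_sum_erase _ _ (Finset.mem_univ j), sum_softmax]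
  have hkS : softmaxProb u k.1 ≤ S := by
    rw [hS]
    exact Finset.single_le_sum (fun i _ => softmax_nonneg u i)
      (Finset.mem_erase.mpr ⟨k.2, Finset.mem_univ _⟩)
  have hpk : Real.exp (-γ) * softmaxProb u j ≤ softmaxProb u k.1 := by
    unfold softmaxProb
    rw [mul_div_assoc', div_le_div_iff₀ hTpos hTpos]
    have : Real.exp (-γ) * Real.exp (u j) = Real.exp (u j - γ) := by
      rw [← Real.exp_add]; ring_nf
    rw [this]
    exact mul_le_mul_of_nonneg_right (Real.exp_le_exp.mpr hku) hTpos.le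
  have hE : Real.exp (-γ) = (Real.exp γ)⁻¹ := Real.exp_neg γ
  have hEpos : 0 < Real.exp γ := Real.exp_pos γ
  rw [div_le_iff₀ (by positivity)]
  have hSnn : 0 ≤ S := Finset.sum_nonneg (fun i _ => softmax_nonneg u i)
  -- S ≥ exp(-γ)(1 - S)  ⇒  S (1 + exp γ) ≥ 1
  have key : Real.exp (-γ) * (1 - S) ≤ S := by
    have : softmaxProb u j = 1 - S := by linarith
    rw [← this]; exact le_trans hpk hkS
  rw [hE] at key
  have := mul_le_mul_of_nonneg_left key hEpos.le
  rw [← mul_assoc, mul_inv_cancel₀ hEpos.ne'] at this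
  nlinarith

/-- Deterministic bridge under logit stability and a gate lower bound:
`WCR^{det}(μ;D') ≤ η⁻¹ (1+e^γ) VWR_γ(Q;D') + ρ`. -/
theorem deterministic_bridge_vulnerable {X : Type*} [MeasurableSpace X] {K d : ℕ}
    (hK : 2 ≤ K)
    (D : Fin K → Measure X) (hD : ∀ j, IsProbabilityMeasure (D j))
    (s : (Fin d → ℝ) → X → Fin K → ℝ)
    (hs : ∀ k : Fin K, Measurable fun p : (Fin d → ℝ) × X => s p.1 p.2 k)
    (γ κ ρ η : ℝ) (hγ : 0 ≤ γ) (hκ : 0 < κ) (hρ0 : 0 ≤ ρ) (hρ1 : ρ ≤ 1) (hη : 0 < η)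
    (Q : Measure (Fin d → ℝ)) (hQ : IsProbabilityMeasure Q)
    (hint : Integrable (fun w => w) Q)
    (μmean : Fin d → ℝ) (hμ : μmean = ∫ w, w ∂Q)
    (hstab : 1 - ρ ≤
      (Q {w | ∀ (x : X) (k : Fin K), |s w x k - s μmean x k| ≤ γ / 2}).toReal)
    (hgate : ∀ (w : Fin d → ℝ) (x : X) (j : Fin K),
      optionMargin (s w x) j ≤ γ → η ≤ gate γ κ (optionMargin (s w x) j)) :
    WCRdet D s μmean ≤ η⁻¹ * (1 + Real.exp γ) * VWR D s γ κ Q + ρ := by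
  haveI : NeZero K := ⟨by omega⟩
  haveI : Nonempty (Fin K) := ⟨⟨0, by omega⟩⟩
  haveI := hQ
  set E := Real.exp γ with hE
  have hEpos : 0 < E := Real.exp_pos γ
  set c := η / (1 + E) with hc
  have hcpos : 0 < c := by positivity
  set G := {w : Fin d → ℝ | ∀ (x : X) (k : Fin K), |s w x k - s μmean x k| ≤ γ / 2} with hG
  unfold WCRdet
  refine ciSup_le fun j => ?_
  haveI := hD j
  set A := {x : X | optionMargin (s μmean x) j ≤ 0} with hA
  set a := ((D j) A).toReal with ha
  set g : (Fin d → ℝ) → X → ℝ := fun w x => gate γ κ (optionMargin (s w x) j) with hgdef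
  set p : Fin K → (Fin d → ℝ) → X → ℝ := fun i w x => softmaxProb (s w x) i with hpdef
  have meas_gp : ∀ i, Measurable fun q : (Fin d → ℝ) × X => g q.1 q.2 * p i q.1 q.2 :=
    fun i => meas_integrand hK s hs γ κ i j
  have bnd : ∀ (i : Fin K) w x, 0 ≤ g w x * p i w x ∧ g w x * p i w x ≤ 1 := by
    intro i w x
    refine ⟨mul_nonneg (gate_nonneg _ _ _) (softmax_nonneg _ _), ?_⟩
    exact mul_le_one₀ (gate_le_one _ _ _) (softmax_nonneg _ _) (softmax_le_one _ _)
  have int_x : ∀ (i : Fin K) w, Integrable (fun x => g w x * p i w x) (D j) := by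
    intro i w
    refine (integrable_const (1:ℝ)).mono'
      ((meas_gp i).comp measurable_prodMk_left).aestronglyMeasurable ?_
    refine ae_of_all _ fun x => ?_
    rw [Real.norm_eq_abs, abs_of_nonneg (bnd i w x).1]; exact (bnd i w x).2
  set h : Fin K → (Fin d → ℝ) → ℝ := fun i w => ∫ x, g w x * p i w x ∂(D j) with hhdef
  have h_sm : ∀ i, StronglyMeasurable (h i) := by
    intro i
    have hj : StronglyMeasurable (Function.uncurry fun w x => g w x * p i w x) :=
      (meas_gp i).stronglyMeasurable
    exact hj.integral_prod_right
  have h01 : ∀ (i : Fin K) w, 0 ≤ h i w ∧ h i w ≤ 1 := by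
    intro i w
    refine ⟨integral_nonneg fun x => (bnd i w x).1, ?_⟩
    calc h i w ≤ ∫ _x, (1:ℝ) ∂(D j) :=
          integral_mono (int_x i w) (integrable_const 1) fun x => (bnd i w x).2
      _ = 1 := by simp
  have int_h : ∀ i, Integrable (h i) Q := by
    intro i
    refine (integrable_const (1:ℝ)).mono' (h_sm i).aestronglyMeasurable ?_
    exact ae_of_all _ fun w => by
      rw [Real.norm_eq_abs, abs_of_nonneg (h01 i w).1]; exact (h01 i w).2
  set H : (Fin d → ℝ) → ℝ := fun w => ∑ i ∈ Finset.univ.erase j, h i w with hHdef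
  have int_H : Integrable H Q := integrable_finset_sum _ fun i _ => int_h i
  have H_int_eq : ∀ w, H w = ∫ x, ∑ i ∈ Finset.univ.erase j, g w x * p i w x ∂(D j) := by
    intro w; rw [integral_finset_sum _ fun i _ => int_x i w]
  have step2 : ∀ w ∈ G, c * a ≤ H w := by
    intro w hw
    have hptwise : ∀ x ∈ A, c ≤ ∑ i ∈ Finset.univ.erase j, g w x * p i w x := by
      intro x hx
      have hΔ : optionMargin (s w x) j ≤ γ := by
        have hmc := margin_close hK (s w x) (s μmean x) j γ (fun k => hw x k)
        have hx' : optionMargin (s μmean x) j ≤ 0 := hx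
        linarith
      have hgg : η ≤ g w x := hgate w x j hΔ
      have htail := softmax_tail hK (s w x) j γ hΔ
      rw [show (∑ i ∈ Finset.univ.erase j, g w x * p i w x)
          = g w x * ∑ i ∈ Finset.univ.erase j, p i w x from by rw [Finset.mul_sum]]
      have hSnn : 0 ≤ ∑ i ∈ Finset.univ.erase j, p i w x :=
        Finset.sum_nonneg fun i _ => softmax_nonneg _ _
      rw [hc, div_le_iff₀ (by positivity)]
      have h1 : 1 / (1 + E) ≤ ∑ i ∈ Finset.univ.erase j, p i w x := htail
      have h1' : (1:ℝ) ≤ (∑ i ∈ Finset.univ.erase j, p i w x) * (1 + E) :=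
        (div_le_iff₀ (by positivity)).mp h1
      nlinarith [mul_le_mul_of_nonneg_right hgg hSnn, hη.le, hEpos.le]
    have markov := mul_meas_ge_le_integral_of_nonneg (μ := D j)
      (f := fun x => ∑ i ∈ Finset.univ.erase j, g w x * p i w x)
      (ae_of_all _ fun x => Finset.sum_nonneg fun i _ => (bnd i w x).1)
      (integrable_finset_sum _ fun i _ => int_x i w) c
    have hm : a ≤ ((D j) {x | c ≤ ∑ i ∈ Finset.univ.erase j, g w x * p i w x}).toReal :=
      ENNReal.toReal_mono (measure_ne_top _ _) (measure_mono hptwise)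
    rw [H_int_eq w]
    calc c * a ≤ c * ((D j) {x | c ≤ ∑ i ∈ Finset.univ.erase j, g w x * p i w x}).toReal :=
          mul_le_mul_of_nonneg_left hm hcpos.le
      _ ≤ _ := markov
  have markovQ := mul_meas_ge_le_integral_of_nonneg (μ := Q) (f := H)
    (ae_of_all _ fun w => Finset.sum_nonneg fun i _ => (h01 i w).1) int_H (c * a)
  have ha0 : (0:ℝ) ≤ a := ENNReal.toReal_nonneg
  have hQG : (Q G).toReal ≤ (Q {w | c * a ≤ H w}).toReal :=
    ENNReal.toReal_mono (measure_ne_top _ _) (measure_mono step2)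
  have step3 : c * a * (Q G).toReal ≤ ∫ w, H w ∂Q :=
    (mul_le_mul_of_nonneg_left hQG (by positivity)).trans markovQ
  have step4 : ∫ w, H w ∂Q = ∑ i ∈ Finset.univ.erase j, Mbar D s γ κ Q i j := by
    rw [integral_finset_sum _ fun i _ => int_h i]
    refine Finset.sum_congr rfl fun i hi => ?_
    have hij : i ≠ j := (Finset.mem_erase.mp hi).1
    simp only [Mbar, if_neg hij]; rfl
  have step5 : ∑ i ∈ Finset.univ.erase j, Mbar D s γ κ Q i j ≤ VWR D s γ κ Q := by
    have h1 : ∑ i ∈ Finset.univ.erase j, Mbar D s γ κ Q i j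
        ≤ ∑ i : Fin K, |Mbar D s γ κ Q i j| :=
      (Finset.sum_le_sum fun i _ => le_abs_self _).trans
        (Finset.sum_le_sum_of_subset_of_nonneg (Finset.erase_subset _ _)
          (fun i _ _ => abs_nonneg _))
    exact h1.trans (le_ciSup (f := fun j : Fin K => ∑ i : Fin K, |Mbar D s γ κ Q i j|)
      (Set.Finite.bddAbove (Set.finite_range _)) j)
  have key : c * (a * (Q G).toReal) ≤ VWR D s γ κ Q := by
    rw [← mul_assoc]
    exact step3.trans (step4 ▸ step5)
  set V := VWR D s γ κ Q with hV
  set q := (Q G).toReal with hq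
  have hq1 : q ≤ 1 := by
    rw [hq]
    calc (Q G).toReal ≤ (Q Set.univ).toReal :=
          ENNReal.toReal_mono (measure_ne_top _ _) (measure_mono (Set.subset_univ _))
      _ = 1 := by simp
  have ha1 : a ≤ 1 := by
    rw [ha]
    calc ((D j) A).toReal ≤ ((D j) Set.univ).toReal :=
          ENNReal.toReal_mono (measure_ne_top _ _) (measure_mono (Set.subset_univ _))
      _ = 1 := by simp
  have hq0 : 1 - ρ ≤ q := hstab
  have haq : a * q ≤ c⁻¹ * V := by
    have h2 := mul_le_mul_of_nonneg_left key (inv_nonneg.mpr hcpos.le)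
    rwa [← mul_assoc, inv_mul_cancel₀ hcpos.ne', one_mul] at h2
  have hcinv : η⁻¹ * (1 + E) = c⁻¹ := by
    rw [hc]; field_simp
  rw [hcinv]
  nlinarith [haq, ha1, ha0, hq1, hq0]
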